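/- Equitability between data and algorithm: let N be finite, a ∉ N, and ṽ(S) = v_A(S \ {a}) if a ∈ S, else v_B(S). If i ∈ N satisfies v_B(S ∪ {i}) = v_A(S) for every S ⊆ N \ {i}, then i and a are symmetric players in ṽ (i.e., ṽ(S ∪ {i}) = ṽ(S ∪ {a}) for all S ⊆ (N ∪ {a}) \ {i, a}), and hence the Shapley values of i and a in ṽ coincide. -/

import Mathlib

open Finset

/-- Equitability between data and algorithm: symmetric players in the augmented game. -/
theorem augmented_equitability {α : Type*} [DecidableEq α]
    (N : Finset α) (a : α) (ha : a ∉ N) (i : α) (hi : i ∈ N)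
    (vA vB : Finset α → ℝ)
    (heq : ∀ S ⊆ N.erase i, vB (insert i S) = vA S)
    (vt : Finset α → ℝ)
    (hvt : ∀ S ⊆ insert a N, vt S = if a ∈ S then vA (S.erase a) else vB S) :
    (∀ S ⊆ ((insert a N).erase i).erase a, vt (insert i S) = vt (insert a S))
    ∧ ∑ S ∈ ((insert a N).erase i).powerset,
        (S.card.factorial * ((insert a N).card - S.card - 1).factorial : ℝ)
            / (((insert a N).card.factorial : ℝ))
          * (vt (insert i S) - vt S)
      = ∑ S ∈ ((insert a N).erase a).powerset,
        (S.card.factorial * ((insert a N).card - S.card - 1).factorial : ℝ)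
            / (((insert a N).card.factorial : ℝ))
          * (vt (insert a S) - vt S) := by
  have hia : i ≠ a := fun h => ha (h ▸ hi)
  have hMa : (insert a N).erase a = N := erase_insert ha
  -- the symmetry statement for S ⊆ N.erase i
  have hsym : ∀ S ⊆ N.erase i, vt (insert i S) = vt (insert a S) := by
    intro S hS
    have haS : a ∉ S := fun h => ha (mem_of_mem_erase (hS h))
    have hiS : i ∉ S := fun h => notMem_erase i N (hS h)
    have hSN : S ⊆ N := hS.trans (erase_subset i N)
    have h1 : insert i S ⊆ insert a N := (insert_subset hi hSN).trans (subset_insert a N)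
    have h2 : insert a S ⊆ insert a N := insert_subset_insert a hSN
    rw [hvt _ h1, hvt _ h2, if_neg (by simp [hia.symm, haS]), if_pos (mem_insert_self a S),
      erase_insert haS, heq S hS]
  have hkey : ((insert a N).erase i).erase a = N.erase i := by
    ext x; simp only [mem_erase, mem_insert]
    constructor
    · rintro ⟨hxa, hxi, h | h⟩
      · exact absurd h hxa
      · exact ⟨hxi, h⟩
    · rintro ⟨hxi, hxN⟩
      exact ⟨fun h => ha (h ▸ hxN), hxi, Or.inr hxN⟩
  constructor
  · intro S hS
    exact hsym S (hkey ▸ hS)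
  · rw [hMa]
    refine Finset.sum_bij' (fun S _ => if a ∈ S then insert i (S.erase a) else S)
      (fun S _ => if i ∈ S then insert a (S.erase i) else S) ?_ ?_ ?_ ?_ ?_
    · intro S hS
      rw [mem_powerset] at hS ⊢
      have hiS : i ∉ S := fun h => notMem_erase i _ (hS h)
      by_cases haS : a ∈ S
      · rw [if_pos haS]
        refine insert_subset hi ?_
        intro x hx
        have hx' := hS (mem_of_mem_erase hx)
        rcases mem_insert.mp (mem_of_mem_erase hx') with h | h
        · exact absurd h (ne_of_mem_erase hx)
        · exact h
      · rw [if_neg haS]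
        intro x hx
        rcases mem_insert.mp (mem_of_mem_erase (hS hx)) with h | h
        · exact absurd (h ▸ hx) haS
        · exact h
    · intro S hS
      rw [mem_powerset] at hS ⊢
      have haS : a ∉ S := fun h => ha (hS h)
      by_cases hiS : i ∈ S
      · rw [if_pos hiS]
        refine insert_subset (mem_erase.mpr ⟨hia.symm, mem_insert_self a N⟩) ?_
        intro x hx
        exact mem_erase.mpr ⟨ne_of_mem_erase hx, mem_insert_of_mem (hS (mem_of_mem_erase hx))⟩
      · rw [if_neg hiS]
        intro x hx
        exact mem_erase.mpr ⟨fun h => hiS (h ▸ hx), mem_insert_of_mem (hS hx)⟩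
    · intro S hS
      rw [mem_powerset] at hS
      have hiS : i ∉ S := fun h => notMem_erase i _ (hS h)
      by_cases haS : a ∈ S
      · have hi1 : i ∈ insert i (S.erase a) := mem_insert_self i _
        rw [if_pos haS, if_pos hi1,
          erase_insert (fun h => hiS (mem_of_mem_erase h)), insert_erase haS]
      · simp only [if_neg haS, if_neg hiS]
    · intro S hS
      rw [mem_powerset] at hS
      have haS : a ∉ S := fun h => ha (hS h)
      by_cases hiS : i ∈ S
      · have ha1 : a ∈ insert a (S.erase i) := mem_insert_self a _
        have haS : a ∉ S := fun h => ha (hS h)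
        rw [if_pos hiS, if_pos ha1,
          erase_insert (fun h => haS (mem_of_mem_erase h)), insert_erase hiS]
      · simp only [if_neg hiS, if_neg haS]
    · intro S hS
      rw [mem_powerset] at hS
      have hiS : i ∉ S := fun h => notMem_erase i _ (hS h)
      have hSM : S ⊆ insert a N := hS.trans (erase_subset i _)
      by_cases haS : a ∈ S
      · rw [if_pos haS]
        set T := S.erase a with hT
        have hiT : i ∉ T := fun h => hiS (mem_of_mem_erase h)
        have haT : a ∉ T := notMem_erase a S
        have hTNi : T ⊆ N.erase i := by
          intro x hx
          have hx' := hSM (mem_of_mem_erase hx)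
          refine mem_erase.mpr ⟨fun h => hiT (h ▸ hx), ?_⟩
          rcases mem_insert.mp hx' with h | h
          · exact absurd h (ne_of_mem_erase hx)
          · exact h
        have hTN : T ⊆ N := hTNi.trans (erase_subset i N)
        have hcard : (insert i T).card = S.card := by
          have hpos : 0 < S.card := card_pos.mpr ⟨a, haS⟩
          rw [card_insert_of_notMem hiT, hT, card_erase_of_mem haS]
          omega
        rw [hcard]
        congr 1
        -- value equality
        have e1 : vt (insert i S) = vA (insert i T) := by
          rw [hvt _ (insert_subset (mem_insert_of_mem hi) hSM),
            if_pos (mem_insert_of_mem haS), erase_insert_of_ne hia]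
        have e2 : vt S = vA T := by rw [hvt _ hSM, if_pos haS]
        have e3 : vt (insert a (insert i T)) = vA (insert i T) := by
          have hsub : insert a (insert i T) ⊆ insert a N :=
            insert_subset_insert a (insert_subset hi hTN)
          rw [hvt _ hsub, if_pos (mem_insert_self a _),
            erase_insert (by simp [hia.symm, haT])]
        have e4 : vt (insert i T) = vA T := by
          rw [hvt _ ((insert_subset hi hTN).trans (subset_insert a N)),
            if_neg (by simp [hia.symm, haT]), heq T hTNi]
        rw [e1, e2, e3, e4]
      · rw [if_neg haS]
        have hSNi : S ⊆ N.erase i := by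
          intro x hx
          refine mem_erase.mpr ⟨fun h => hiS (h ▸ hx), ?_⟩
          rcases mem_insert.mp (hSM hx) with h | h
          · exact absurd (h ▸ hx) haS
          · exact h
        rw [hsym S hSNi]
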